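/- Let p be a prime and K a finite separable field extension of the rational function field F_p(x). Then K has degree p over its subfield K^p of p-th powers: the dimension of K as a vector space over the range of the Frobenius endomorphism f ↦ f^p equals p. -/

import Mathlib

open Polynomial

lemma RatFunc.intDegree_pow' {k : Type*} [Field k] {b : RatFunc k} (hb : b ≠ 0) (n : ℕ) :
    (b ^ n).intDegree = n * b.intDegree := by
  induction n with
  | zero => simp [RatFunc.intDegree_one]
  | succ n ih =>
      rw [pow_succ, RatFunc.intDegree_mul (pow_ne_zero n hb) hb, ih]
      push_cast; ring

theorem finrank_over_pth_powers_eq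
    (p : ℕ) [Fact p.Prime] (K : Type*) [Field K] [CharP K p]
    [Algebra (RatFunc (ZMod p)) K]
    [FiniteDimensional (RatFunc (ZMod p)) K]
    [Algebra.IsSeparable (RatFunc (ZMod p)) K] :
    Module.finrank (↥(frobenius K p).fieldRange) K = p := by
  have hp := Fact.out (p := p.Prime)
  set F := RatFunc (ZMod p) with hF
  haveI : CharP F p := charP_of_injective_algebraMap (algebraMap (ZMod p) F).injective p
  set Kp : Subfield K := (frobenius K p).fieldRange with hKp
  set x : K := algebraMap F K RatFunc.X with hxdef
  -- `x` is not a p-th power in `K`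
  have hx : x ∉ Kp := by
    rintro ⟨y, hy⟩
    have hy' : y ^ p = x := hy
    have hX : ∀ b : F, b ^ p ≠ RatFunc.X := by
      intro b hb
      have hb0 : b ≠ 0 := by
        rintro rfl
        rw [zero_pow hp.ne_zero] at hb
        exact RatFunc.X_ne_zero hb.symm
      have hdeg := RatFunc.intDegree_pow' hb0 p
      rw [hb, RatFunc.intDegree_X] at hdeg
      have : (p : ℤ) ∣ 1 := Dvd.intro _ hdeg.symm
      have h2 := hp.two_le
      have := Int.le_of_dvd one_pos this
      omega
    have hirr : Irreducible (X ^ p - C (RatFunc.X : F)) :=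
      X_pow_sub_C_irreducible_of_prime hp hX
    have hmin : X ^ p - C (RatFunc.X : F) = minpoly F y := by
      refine minpoly.eq_of_irreducible_of_monic hirr ?_ (monic_X_pow_sub_C _ hp.ne_zero)
      simp [hy', hxdef]
    have hsep : (minpoly F y).Separable := Algebra.IsSeparable.isSeparable F y
    rw [← hmin] at hsep
    have hder : derivative (X ^ p - C (RatFunc.X : F)) = 0 := by
      rw [derivative_sub, derivative_C, derivative_X_pow, sub_zero]
      simp
    rw [Polynomial.Separable, hder, isCoprime_zero_right] at hsep
    exact hirr.not_isUnit hsep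
  -- the minimal polynomial of `x` over `Kp`
  set c : ↥Kp := ⟨x ^ p, ⟨x, rfl⟩⟩ with hc
  have hcx : ∀ b : ↥Kp, b ^ p ≠ c := by
    intro b hb
    apply hx
    have : (b : K) ^ p = x ^ p := congrArg Subtype.val hb
    have : (b : K) = x := frobenius_inj K p this
    exact this ▸ b.2
  have hirr2 : Irreducible (X ^ p - C c) := X_pow_sub_C_irreducible_of_prime hp hcx
  have haev : aeval x (X ^ p - C c) = 0 := by
    rw [map_sub, map_pow, aeval_X, aeval_C]
    exact sub_eq_zero.2 rfl
  have hmin2 : X ^ p - C c = minpoly ↥Kp x :=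
    minpoly.eq_of_irreducible_of_monic hirr2 haev (monic_X_pow_sub_C _ hp.ne_zero)
  have hint : IsIntegral ↥Kp x :=
    ⟨X ^ p - C c, monic_X_pow_sub_C _ hp.ne_zero, by simpa [Polynomial.aeval_def] using haev⟩
  set L : IntermediateField ↥Kp K := IntermediateField.adjoin ↥Kp {x} with hL
  -- every element of `K` lies in `L`
  have hxL : x ∈ L := IntermediateField.subset_adjoin _ _ rfl
  have hpoly : ∀ q : (ZMod p)[X], algebraMap F K (algebraMap (ZMod p)[X] F q) ∈ L := by
    intro q
    induction q using Polynomial.induction_on' with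
    | add q r hq hr => rw [map_add, map_add]; exact add_mem hq hr
    | monomial n cc =>
      rw [← Polynomial.C_mul_X_pow_eq_monomial, map_mul, map_mul, map_pow, map_pow]
      refine mul_mem ?_ (pow_mem ?_ n)
      · have h1 : algebraMap F K (algebraMap (ZMod p)[X] F (Polynomial.C cc))
            = ((cc.val : ℕ) : K) := by
          have hcast : ((cc.val : ℕ) : ZMod p) = cc := by
            rw [ZMod.natCast_val, ZMod.cast_id]
          conv_lhs => rw [← hcast, Polynomial.C_eq_natCast]
          rw [map_natCast, map_natCast]
        rw [h1]
        exact natCast_mem L _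
      · rw [RatFunc.algebraMap_X]
        exact hxL
  have hFmem : ∀ f : F, algebraMap F K f ∈ L := by
    intro f
    obtain ⟨q, r, -, hqr⟩ := IsFractionRing.div_surjective (A := (ZMod p)[X]) f
    rw [← hqr, map_div₀]
    exact div_mem (hpoly q) (hpoly r)
  have htop : L = ⊤ := by
    rw [eq_top_iff]
    rintro a -
    -- a^p ∈ L
    have haL : a ^ p ∈ L := by
      have : a ^ p ∈ Kp := ⟨a, rfl⟩
      exact L.algebraMap_mem ⟨a ^ p, this⟩
    set c' : ↥L := ⟨a ^ p, haL⟩ with hc'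
    have haev2 : aeval a (X ^ p - C c') = 0 := by
      rw [map_sub, map_pow, aeval_X, aeval_C]
      exact sub_eq_zero.2 rfl
    have hint2 : IsIntegral ↥L a :=
      ⟨X ^ p - C c', monic_X_pow_sub_C _ hp.ne_zero, by rw [Polynomial.aeval_def] at haev2; exact haev2⟩
    set g := minpoly ↥L a with hg
    have hdvd : g ∣ X ^ p - C c' := minpoly.dvd _ _ haev2
    -- g is separable
    set f : F →+* ↥L := (algebraMap F K).codRestrict L hFmem with hfdef
    have hcomp : (algebraMap ↥L K).comp f = algebraMap F K := rfl
    have hga : aeval a ((minpoly F a).map f) = 0 := by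
      rw [Polynomial.aeval_def, Polynomial.eval₂_map, hcomp, ← Polynomial.aeval_def,
        minpoly.aeval]
    have hgsep : g.Separable :=
      (Polynomial.Separable.map (Algebra.IsSeparable.isSeparable F a)).of_dvd (minpoly.dvd _ _ hga)
    -- map everything to K
    set gK := g.map (algebraMap ↥L K) with hgK
    have hfact : (X ^ p - C c').map (algebraMap ↥L K) = (X - C a) ^ p := by
      rw [Polynomial.map_sub, Polynomial.map_pow, Polynomial.map_X, Polynomial.map_C]
      rw [sub_pow_char (R := K[X])]
      congr 1
      rw [← Polynomial.C_pow]
      rfl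
    have hKdvd : gK ∣ (X - C a) ^ p := by
      rw [← hfact]; exact Polynomial.map_dvd _ hdvd
    obtain ⟨m, hm, hassoc⟩ := (dvd_prime_pow (prime_X_sub_C a) p).1 hKdvd
    have hgKmonic : gK.Monic := (minpoly.monic hint2).map _
    match m, hm with
    | 0, _ =>
      exfalso
      rw [pow_zero] at hassoc
      have := associated_one_iff_isUnit.1 hassoc
      have h0 := Polynomial.natDegree_eq_zero_of_isUnit this
      rw [Polynomial.natDegree_map] at h0
      have hpos := minpoly.natDegree_pos hint2
      rw [← hg] at hpos
      omega
    | 1, _ =>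
      rw [pow_one] at hassoc
      have heq : gK = X - C a :=
        Polynomial.eq_of_monic_of_associated hgKmonic (monic_X_sub_C a) hassoc
      have h0 := congrArg (fun q => Polynomial.coeff q 0) heq
      simp only [hgK, Polynomial.coeff_map, Polynomial.coeff_sub, Polynomial.coeff_X_zero,
        Polynomial.coeff_C_zero, zero_sub] at h0
      have hmem : algebraMap ↥L K (g.coeff 0) ∈ L := (g.coeff 0).2
      have : a = -(algebraMap ↥L K (g.coeff 0)) := by rw [h0, neg_neg]
      rw [this]
      exact neg_mem hmem
    | (m + 2), _ =>
      exfalso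
      have hsq : (X - C a) * (X - C a) ∣ gK := by
        refine dvd_trans ?_ hassoc.symm.dvd
        rw [← pow_two]
        exact pow_dvd_pow _ (by omega)
      exact Polynomial.not_isUnit_X_sub_C a ((hgsep.map).squarefree _ hsq)
  -- conclude
  have hfr := IntermediateField.adjoin.finrank hint
  rw [← hL, htop, IntermediateField.finrank_top'] at hfr
  rw [hfr, ← hmin2, natDegree_X_pow_sub_C]
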